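/- arXiv:1207.4104 — 3 statements merged into one kernel-verified Lean document; each statement's English description precedes it below -/
import Mathlib

section
/- Let H be a fixed real n×m matrix with n ≥ m, and let k ≤ n. Then the following are equivalent: (i) for every x ∈ ℝ^m and every e ∈ ℝ^n with at most k nonzero entries, x is the unique minimizer of z ↦ ‖(Hx + e) − Hz‖₁ over z ∈ ℝ^m; (ii) for every nonzero z ∈ ℝ^m and every subset K ⊆ {1,…,n} with |K| = k, one has ‖(Hz)_K‖₁ < ‖(Hz)_{K̄}‖₁, where K̄ = {1,…,n} \ K. -/
open MeasureTheory ProbabilityTheory Finset Filter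

noncomputable section

/-- The `n × m` Toeplitz matrix built from the input sequence
`h = (h_{-m+2}, …, h_n)`, reindexed as `h : Fin (n+m-1) → ℝ`;
the `(i,j)` entry (0-based) is the input with index `i + j`, which corresponds to
`H_{i,j} = h_{i-m+j}` in 1-based indexing. -/
def toeplitz (n m : ℕ) (h : Fin (n + m - 1) → ℝ) : Matrix (Fin n) (Fin m) ℝ :=
  fun i j => h ⟨i.1 + j.1, by have := i.2; have := j.2; omega⟩

/-- The ℓ¹ norm of a vector in `ℝ^k`. -/
def l1 {k : ℕ} (v : Fin k → ℝ) : ℝ := ∑ i, |v i|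

/-- The Euclidean (ℓ²) norm of a vector in `ℝ^k`. -/
def l2 {k : ℕ} (v : Fin k → ℝ) : ℝ := Real.sqrt (∑ i, (v i) ^ 2)

/-- Product of `d` i.i.d. standard Gaussian `N(0,1)` measures on `ℝ^d`. -/
def gaussPi (d : ℕ) : Measure (Fin d → ℝ) := Measure.pi fun _ => gaussianReal 0 1

/-- The standard Gaussian cumulative distribution function `Φ`. -/
def stdGaussianCDF (t : ℝ) : ℝ :=
  (Real.sqrt (2 * Real.pi))⁻¹ * ∫ x in Set.Iic t, Real.exp (-x ^ 2 / 2)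

open Classical in
/-- Number of nonzero entries of a vector. -/
def sparsity {k : ℕ} (v : Fin k → ℝ) : ℕ := (Finset.univ.filter fun i => v i ≠ 0).card

/-- For a fixed matrix `H`, exact ℓ¹ recovery of every `x` from up to
`k` outliers is equivalent to the null-space-type balance condition
`‖(Hz)_K‖₁ < ‖(Hz)_{K̄}‖₁` for all nonzero `z` and all `K` of cardinality `k`. -/
theorem stmt1 (n m k : ℕ) (hmn : m ≤ n) (hkn : k ≤ n)
    (H : Matrix (Fin n) (Fin m) ℝ) :
    (∀ x : Fin m → ℝ, ∀ e : Fin n → ℝ, sparsity e ≤ k →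
      ∀ z : Fin m → ℝ, z ≠ x →
        l1 (H.mulVec x + e - H.mulVec x) < l1 (H.mulVec x + e - H.mulVec z)) ↔
    (∀ z : Fin m → ℝ, z ≠ 0 → ∀ K : Finset (Fin n), K.card = k →
      ∑ i ∈ K, |H.mulVec z i| < ∑ i ∈ Kᶜ, |H.mulVec z i|) := by
  classical
  constructor
  · intro hrec z hz K hK
    set e : Fin n → ℝ := fun i => if i ∈ K then H.mulVec z i else 0 with he
    have hsp : sparsity e ≤ k := by
      rw [← hK]
      apply Finset.card_le_card
      intro i hi
      simp only [sparsity, Finset.mem_filter, Finset.mem_univ, true_and] at hi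
      by_contra h
      exact hi (by simp [he, h])
    have h0 := hrec 0 e hsp z (by simpa using hz)
    have e1 : H.mulVec 0 + e - H.mulVec 0 = e := by
      funext i; simp [Matrix.mulVec_zero]
    have e2 : H.mulVec 0 + e - H.mulVec z = fun i => e i - H.mulVec z i := by
      funext i; simp [Matrix.mulVec_zero, Pi.sub_apply]
    rw [e1, e2] at h0
    have l1e : l1 e = ∑ i ∈ K, |H.mulVec z i| := by
      rw [l1, ← Finset.sum_filter_add_sum_filter_not Finset.univ (· ∈ K)]
      simp only [Finset.filter_mem_eq_inter, Finset.univ_inter]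
      rw [show (Finset.univ.filter fun i => ¬ i ∈ K) = Kᶜ by ext i; simp]
      have : ∑ i ∈ Kᶜ, |e i| = 0 := Finset.sum_eq_zero fun i hi => by
        simp [he, (Finset.mem_compl.1 hi)]
      rw [this, add_zero]
      exact Finset.sum_congr rfl fun i hi => by simp [he, hi]
    have l1e2 : l1 (fun i => e i - H.mulVec z i) = ∑ i ∈ Kᶜ, |H.mulVec z i| := by
      rw [l1, ← Finset.sum_filter_add_sum_filter_not Finset.univ (· ∈ K)]
      simp only [Finset.filter_mem_eq_inter, Finset.univ_inter]
      rw [show (Finset.univ.filter fun i => ¬ i ∈ K) = Kᶜ by ext i; simp]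
      have h1 : ∑ i ∈ K, |e i - H.mulVec z i| = 0 := Finset.sum_eq_zero fun i hi => by
        simp [he, hi]
      rw [h1, zero_add]
      exact Finset.sum_congr rfl fun i hi => by
        simp [he, (Finset.mem_compl.1 hi)]
    rw [l1e, l1e2] at h0
    exact h0
  · intro hbal x e hsp z hzx
    have hw : z - x ≠ 0 := sub_ne_zero.2 hzx
    set w : Fin m → ℝ := z - x with hwdef
    obtain ⟨K, hSK, -, hK⟩ := Finset.exists_subsuperset_card_eq
      (Finset.subset_univ (Finset.univ.filter fun i => e i ≠ 0)) hsp
      (by simpa [Fintype.card_fin] using hkn)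
    have hbalK := hbal w hw K hK
    have hzero : ∀ i ∈ Kᶜ, e i = 0 := by
      intro i hi
      by_contra h
      exact (Finset.mem_compl.1 hi) (hSK (by simp [h]))
    have e1 : H.mulVec x + e - H.mulVec x = e := by funext i; simp
    have e2 : H.mulVec x + e - H.mulVec z = fun i => e i - H.mulVec w i := by
      funext i
      simp [hwdef, Matrix.mulVec_sub, Pi.sub_apply]
      ring
    rw [e1, e2]
    have split : ∀ f : Fin n → ℝ, ∑ i, f i = ∑ i ∈ K, f i + ∑ i ∈ Kᶜ, f i :=
      fun f => (Finset.sum_add_sum_compl K f).symm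
    rw [l1, l1, split, split]
    have hA : ∑ i ∈ Kᶜ, |e i| = 0 := Finset.sum_eq_zero fun i hi => by simp [hzero i hi]
    have hB : ∑ i ∈ Kᶜ, |e i - H.mulVec w i| = ∑ i ∈ Kᶜ, |H.mulVec w i| :=
      Finset.sum_congr rfl fun i hi => by rw [hzero i hi]; simp
    have hC : ∑ i ∈ K, |e i| - ∑ i ∈ K, |H.mulVec w i| ≤ ∑ i ∈ K, |e i - H.mulVec w i| := by
      rw [← Finset.sum_sub_distrib]
      exact Finset.sum_le_sum fun i _ => abs_sub_abs_le_abs_sub _ _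
    rw [hA, hB, add_zero]
    linarith
end
end

section
/- Let X ~ N(0, σ²) be a centered Gaussian random variable with standard deviation σ > 0, let t > 0, and let l ∈ ℝ. Then E[|l + tX| − |l|] = √(2/π) · tσ · e^{−l²/(2t²σ²)} − 2|l|(1 − Φ(|l|/(tσ))), where Φ is the standard Gaussian CDF. Moreover this quantity is nonnegative and is a nonincreasing function of |l|. -/
open MeasureTheory ProbabilityTheory Finset Filter

noncomputable section

section Aux
open Real Filter

def psi (u : ℝ) : ℝ := (Real.sqrt (2 * Real.pi))⁻¹ * Real.exp (-u ^ 2 / 2)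

lemma psi_nonneg (u : ℝ) : 0 ≤ psi u := by
  unfold psi; positivity

lemma psi_even (u : ℝ) : psi (-u) = psi u := by
  simp [psi, neg_sq]

lemma continuous_psi : Continuous psi := by
  unfold psi; fun_prop

lemma integrable_exp_half : Integrable (fun u : ℝ => Real.exp (-u ^ 2 / 2)) := by
  have := integrable_exp_neg_mul_sq (by norm_num : (0:ℝ) < 1/2)
  convert this using 2 with u
  ring_nf

lemma integrable_psi : Integrable psi := by
  unfold psi
  exact integrable_exp_half.const_mul _

lemma integral_psi : ∫ u, psi u = 1 := by
  unfold psi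
  rw [integral_const_mul]
  have h : (fun u : ℝ => Real.exp (-u ^ 2 / 2)) = fun u : ℝ => Real.exp (-(1/2) * u ^ 2) := by
    ext u; ring_nf
  rw [h, integral_gaussian]
  rw [inv_mul_eq_div, div_eq_one_iff_eq (by positivity)]
  norm_num
  ring

lemma integral_psi_Iic (s : ℝ) : ∫ u in Set.Iic s, psi u = stdGaussianCDF s := by
  unfold psi stdGaussianCDF
  rw [integral_const_mul]

lemma integral_psi_Ioi (s : ℝ) : ∫ u in Set.Ioi s, psi u = 1 - stdGaussianCDF s := by
  have h := intervalIntegral.integral_Iic_add_Ioi (b := s) integrable_psi.integrableOn integrable_psi.integrableOn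
  rw [integral_psi] at h
  rw [← h, integral_psi_Iic]; ring

lemma hasDerivAt_neg_psi (u : ℝ) : HasDerivAt (fun x => -psi x) (u * psi u) u := by
  unfold psi
  have h1 : HasDerivAt (fun x : ℝ => -x ^ 2 / 2) (-u) u := by
    have := (hasDerivAt_pow 2 u).neg.div_const 2
    refine this.congr_deriv ?_
    simp; ring
  have h2 := (h1.exp).const_mul (Real.sqrt (2 * Real.pi))⁻¹
  have := h2.neg
  refine this.congr_deriv ?_
  ring

lemma tendsto_psi_atTop : Tendsto (fun x => -psi x) atTop (nhds 0) := by
  rw [← neg_zero]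
  apply Tendsto.neg
  unfold psi
  rw [show (0:ℝ) = (Real.sqrt (2 * Real.pi))⁻¹ * 0 by ring]
  apply Tendsto.const_mul
  apply Real.tendsto_exp_atBot.comp
  have h : Tendsto (fun k : ℝ => k ^ 2) atTop atTop := tendsto_pow_atTop two_ne_zero
  exact (tendsto_neg_atBot_iff.mpr h).atBot_div_const (by norm_num)


lemma integral_mul_psi_Ioi {b : ℝ} (hb : 0 ≤ b) :
    ∫ u in Set.Ioi b, u * psi u = psi b := by
  have h := integral_Ioi_of_hasDerivAt_of_nonneg
    (g := fun x => -psi x) (g' := fun u => u * psi u) (a := b) (l := 0)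
    (continuous_psi.neg.continuousWithinAt)
    (fun x _ => hasDerivAt_neg_psi x)
    (fun x hx => mul_nonneg (le_trans hb (le_of_lt hx)) (psi_nonneg x))
    tendsto_psi_atTop
  simpa using h

lemma integrableOn_mul_psi_Ioi {b : ℝ} (hb : 0 ≤ b) :
    IntegrableOn (fun u => u * psi u) (Set.Ioi b) := by
  exact integrableOn_Ioi_deriv_of_nonneg
    (continuous_psi.neg.continuousWithinAt)
    (fun x _ => hasDerivAt_neg_psi x)
    (fun x hx => mul_nonneg (le_trans hb (le_of_lt hx)) (psi_nonneg x))
    tendsto_psi_atTop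

/-- Integrability of `g * psi` for `g` dominated by `a*|u|`. -/
lemma integrable_dominated {g : ℝ → ℝ} {a : ℝ} (ha : 0 ≤ a) (hg : Continuous g)
    (hb : ∀ u, |g u| ≤ a * |u|) : Integrable (fun u => g u * psi u) := by
  have hbound : Integrable (fun u : ℝ =>
      a * Real.exp 1 * (Real.sqrt (2 * Real.pi))⁻¹ * Real.exp (-(1/4) * u ^ 2)) :=
    (integrable_exp_neg_mul_sq (by norm_num : (0:ℝ) < 1/4)).const_mul _
  refine hbound.mono ((hg.mul continuous_psi).aestronglyMeasurable) ?_
  refine Eventually.of_forall fun u => ?_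
  have h1 : |u| ≤ Real.exp (1 + u ^ 2 / 4) := by
    have h2 : |u| ≤ Real.exp |u| := (Real.add_one_le_exp |u|).trans' (by linarith)
    refine h2.trans (Real.exp_le_exp.mpr ?_)
    nlinarith [sq_nonneg (|u| - 2), sq_abs u]
  have hpsi : psi u ≤ (Real.sqrt (2 * Real.pi))⁻¹ * Real.exp (-u ^ 2 / 2) := le_of_eq rfl
  have key : |u| * Real.exp (-u ^ 2 / 2) ≤ Real.exp 1 * Real.exp (-(1/4) * u ^ 2) := by
    calc |u| * Real.exp (-u ^ 2 / 2) ≤ Real.exp (1 + u ^ 2 / 4) * Real.exp (-u ^ 2 / 2) := by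
          exact mul_le_mul_of_nonneg_right h1 (Real.exp_nonneg _)
      _ = Real.exp 1 * Real.exp (-(1/4) * u ^ 2) := by
          rw [← Real.exp_add, ← Real.exp_add]; ring_nf
  have hs : (0:ℝ) ≤ (Real.sqrt (2 * Real.pi))⁻¹ := by positivity
  simp only [norm_mul, Real.norm_eq_abs]
  rw [abs_of_nonneg (psi_nonneg u), abs_of_nonneg ha, abs_of_nonneg (Real.exp_nonneg _),
    abs_of_nonneg hs, abs_of_nonneg (Real.exp_nonneg _)]
  calc |g u| * psi u ≤ (a * |u|) * psi u :=
        mul_le_mul_of_nonneg_right (hb u) (psi_nonneg u)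
    _ = a * ((Real.sqrt (2 * Real.pi))⁻¹ * (|u| * Real.exp (-u ^ 2 / 2))) := by
        unfold psi; ring
    _ ≤ a * ((Real.sqrt (2 * Real.pi))⁻¹ * (Real.exp 1 * Real.exp (-(1/4) * u ^ 2))) := by
        apply mul_le_mul_of_nonneg_left _ ha
        exact mul_le_mul_of_nonneg_left key hs
    _ = a * Real.exp 1 * (Real.sqrt (2 * Real.pi))⁻¹ * Real.exp (-(1/4) * u ^ 2) := by ring

lemma key_integral {a c : ℝ} (ha : 0 < a) (hc : 0 ≤ c) :
    ∫ u, max (a * |u| - c) 0 * psi u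
      = 2 * a * psi (c / a) - 2 * c * (1 - stdGaussianCDF (c / a)) := by
  set b := c / a with hbdef
  have hb0 : 0 ≤ b := div_nonneg hc ha.le
  have hab : a * b = c := by rw [hbdef]; field_simp
  set f : ℝ → ℝ := fun u => (a * u - c) * psi u with hf
  have hfeq : f = fun u => a * (u * psi u) - c * psi u := by funext u; simp only [hf]; ring
  have h1 : IntegrableOn (fun u => a * (u * psi u)) (Set.Ioi b) :=
    (integrableOn_mul_psi_Ioi hb0).const_mul a
  have h2 : IntegrableOn (fun u => c * psi u) (Set.Ioi b) :=
    (integrable_psi.integrableOn).const_mul c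
  have hfint : IntegrableOn f (Set.Ioi b) := by rw [hfeq]; exact h1.sub h2
  have hfval : ∫ u in Set.Ioi b, f u = a * psi b - c * (1 - stdGaussianCDF b) := by
    rw [hfeq, integral_sub h1 h2, integral_const_mul, integral_const_mul,
      integral_mul_psi_Ioi hb0, integral_psi_Ioi]
  set G : ℝ → ℝ := fun u => max (a * |u| - c) 0 * psi u with hG
  have hmcont : Continuous (fun u : ℝ => max (a * |u| - c) 0) :=
    ((continuous_const.mul continuous_abs).sub continuous_const).max continuous_const
  have hmbnd : ∀ u : ℝ, |max (a * |u| - c) 0| ≤ a * |u| := by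
    intro u
    rw [abs_of_nonneg (le_max_right _ _)]
    exact max_le (by linarith) (by positivity)
  have hGint : Integrable G := integrable_dominated ha.le hmcont hmbnd
  have hIic : ∫ u in Set.Iic (-b), G u = ∫ u in Set.Ioi b, f u := by
    have h1 : Set.EqOn G (fun u => f (-u)) (Set.Iic (-b)) := by
      intro u hu
      simp only [Set.mem_Iic] at hu
      have hu0 : u ≤ 0 := le_trans hu (by linarith)
      simp only [hG, hf, psi_even]
      rw [abs_of_nonpos hu0, max_eq_left (by nlinarith)]
    rw [setIntegral_congr_fun measurableSet_Iic h1]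
    have := integral_comp_neg_Iic (-b) f
    rwa [neg_neg] at this
  have hIoc : ∫ u in Set.Ioc (-b) b, G u = 0 := by
    rw [setIntegral_congr_fun measurableSet_Ioc (g := fun _ => (0:ℝ))]
    · simp
    · intro u hu
      simp only [Set.mem_Ioc] at hu
      have habs : |u| ≤ b := abs_le.mpr ⟨hu.1.le, hu.2⟩
      simp only [hG]
      rw [max_eq_right (by nlinarith)]
      ring
  have hIoi : ∫ u in Set.Ioi b, G u = ∫ u in Set.Ioi b, f u := by
    apply setIntegral_congr_fun measurableSet_Ioi
    intro u hu
    simp only [Set.mem_Ioi] at hu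
    have hu0 : 0 ≤ u := le_trans hb0 hu.le
    simp only [hG, hf]
    rw [abs_of_nonneg hu0, max_eq_left (by nlinarith)]
  have hsplit2 : ∫ u in Set.Ioi (-b), G u = (∫ u in Set.Ioc (-b) b, G u) + ∫ u in Set.Ioi b, G u := by
    rw [← setIntegral_union (Set.Ioc_disjoint_Ioi le_rfl) measurableSet_Ioi
      hGint.integrableOn hGint.integrableOn, Set.Ioc_union_Ioi_eq_Ioi (by linarith : -b ≤ b)]
  have hsplit1 := intervalIntegral.integral_Iic_add_Ioi (b := -b) (f := G) (μ := volume)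
    hGint.integrableOn hGint.integrableOn
  have : ∫ u, G u = 2 * (∫ u in Set.Ioi b, f u) := by
    rw [← hsplit1, hsplit2, hIic, hIoc, hIoi]; ring
  rw [show (∫ u, max (a * |u| - c) 0 * psi u) = ∫ u, G u from rfl, this, hfval]
  ring

lemma abs_ident (l w : ℝ) :
    (|l + w| - |l|) + (|l - w| - |l|) = 2 * max (|w| - |l|) 0 := by
  rcases abs_cases l with ⟨h1, h1'⟩ | ⟨h1, h1'⟩ <;>
    rcases abs_cases w with ⟨h2, h2'⟩ | ⟨h2, h2'⟩ <;>
    rcases abs_cases (l + w) with ⟨h3, h3'⟩ | ⟨h3, h3'⟩ <;>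
    rcases abs_cases (l - w) with ⟨h4, h4'⟩ | ⟨h4, h4'⟩ <;>
    rcases max_cases (|w| - |l|) 0 with ⟨h5, h5'⟩ | ⟨h5, h5'⟩ <;>
    rw [h5] <;> linarith

/-- step R1: map from variance σ² to standard -/
lemma red1 (σ t l : ℝ) (hσ : 0 < σ) :
    (∫ x, (|l + t * x| - |l|) ∂ gaussianReal 0 (Real.toNNReal (σ ^ 2))) =
      ∫ u, (|l + t * σ * u| - |l|) ∂ gaussianReal 0 1 := by
  have hmap := gaussianReal_map_const_mul (μ := 0) (v := 1) σ
  have hvar : NNReal.mk (σ ^ 2) (sq_nonneg σ) * 1 = Real.toNNReal (σ ^ 2) := by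
    rw [Real.toNNReal_of_nonneg (sq_nonneg σ)]
    simp
  rw [show gaussianReal 0 (Real.toNNReal (σ ^ 2)) = (gaussianReal 0 1).map (σ * ·) by
    rw [hmap, mul_zero, hvar]]
  rw [integral_map (measurable_const_mul σ).aemeasurable]
  · congr 1 with u
    ring_nf
  · exact (Continuous.aestronglyMeasurable (by fun_prop))

/-- step R2: density -/
lemma red2 (h : ℝ → ℝ) (hc : Continuous h) :
    (∫ u, h u ∂ gaussianReal 0 1) = ∫ u, h u * psi u := by
  rw [gaussianReal_of_var_ne_zero 0 one_ne_zero]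
  have hpdf : gaussianPDF 0 1 = fun x => ((psi x).toNNReal : ENNReal) := by
    funext x
    rw [gaussianPDF]
    congr 1
    unfold gaussianPDFReal psi
    norm_num
  rw [hpdf, integral_withDensity_eq_integral_smul
    (continuous_psi.measurable.real_toNNReal) h]
  congr 1 with u
  rw [NNReal.smul_def, smul_eq_mul, Real.coe_toNNReal _ (psi_nonneg u)]
  ring

/-- step R3: symmetrization -/
lemma red3 (a l : ℝ) (ha : 0 < a) :
    (∫ u, (|l + a * u| - |l|) * psi u) = ∫ u, max (a * |u| - |l|) 0 * psi u := by
  have habs : ∀ s : ℝ, |(|l + s| - |l|)| ≤ |s| := fun s => by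
    have := abs_abs_sub_abs_le_abs_sub (l + s) l
    simpa using this
  have hint1 : Integrable (fun u => (|l + a * u| - |l|) * psi u) := by
    apply integrable_dominated ha.le (by fun_prop)
    intro u
    calc |(|l + a * u| - |l|)| ≤ |a * u| := habs _
      _ = a * |u| := by rw [abs_mul, abs_of_pos ha]
  have hint2 : Integrable (fun u => (|l - a * u| - |l|) * psi u) := by
    apply integrable_dominated ha.le (by fun_prop)
    intro u
    calc |(|l - a * u| - |l|)| ≤ |(-(a * u))| := by
          have := habs (-(a * u)); simpa [sub_eq_add_neg] using this
      _ = a * |u| := by rw [abs_neg, abs_mul, abs_of_pos ha]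
  have hneg : (∫ u, (|l + a * u| - |l|) * psi u) =
      ∫ u, (|l - a * u| - |l|) * psi u := by
    rw [← integral_neg_eq_self (fun u => (|l + a * u| - |l|) * psi u) volume]
    congr 1 with u
    rw [show psi (-u) = psi u from by simp [psi, neg_sq]]
    ring_nf
  have : (∫ u, (|l + a * u| - |l|) * psi u) =
      (∫ u, ((|l + a * u| - |l|) * psi u + (|l - a * u| - |l|) * psi u)) / 2 := by
    rw [integral_add hint1 hint2, ← hneg]; ring
  rw [this]
  rw [show (fun u => ((|l + a * u| - |l|) * psi u + (|l - a * u| - |l|) * psi u))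
      = fun u => 2 * (max (a * |u| - |l|) 0 * psi u) from ?_]
  · rw [integral_const_mul (μ := volume) 2 (fun u => max (a * |u| - |l|) 0 * psi u)]
    ring
  · funext u
    have := abs_ident l (a * u)
    rw [abs_mul, abs_of_pos ha] at this
    nlinarith [this, psi_nonneg u]


end Aux

theorem stmt16 (σ t : ℝ) (hσ : 0 < σ) (ht : 0 < t) :
    (∀ l : ℝ,
      (∫ x, (|l + t * x| - |l|) ∂ gaussianReal 0 (Real.toNNReal (σ ^ 2))) =
        Real.sqrt (2 / Real.pi) * t * σ * Real.exp (-l ^ 2 / (2 * t ^ 2 * σ ^ 2)) -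
          2 * |l| * (1 - stdGaussianCDF (|l| / (t * σ)))) ∧
    (∀ l : ℝ,
      0 ≤ ∫ x, (|l + t * x| - |l|) ∂ gaussianReal 0 (Real.toNNReal (σ ^ 2))) ∧
    (∀ l₁ l₂ : ℝ, |l₁| ≤ |l₂| →
      (∫ x, (|l₂ + t * x| - |l₂|) ∂ gaussianReal 0 (Real.toNNReal (σ ^ 2))) ≤
        ∫ x, (|l₁ + t * x| - |l₁|) ∂ gaussianReal 0 (Real.toNNReal (σ ^ 2))) := by
  have ha : 0 < t * σ := mul_pos ht hσ
  have hred : ∀ l : ℝ,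
      (∫ x, (|l + t * x| - |l|) ∂ gaussianReal 0 (Real.toNNReal (σ ^ 2))) =
        ∫ u, max (t * σ * |u| - |l|) 0 * psi u := by
    intro l
    rw [red1 σ t l hσ, red2 _ (by fun_prop), red3 (t * σ) l ha]
  have hintmax : ∀ c : ℝ, 0 ≤ c → Integrable (fun u => max (t * σ * |u| - c) 0 * psi u) := by
    intro c hc
    apply integrable_dominated ha.le
    · exact ((continuous_const.mul continuous_abs).sub continuous_const).max continuous_const
    · intro u
      rw [abs_of_nonneg (le_max_right _ _)]
      exact max_le (by linarith) (by positivity)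
  refine ⟨?_, ?_, ?_⟩
  · intro l
    rw [hred l, key_integral ha (abs_nonneg l)]
    have hsq : (0:ℝ) < Real.sqrt (2 * Real.pi) := Real.sqrt_pos.mpr (by positivity)
    have hconst : Real.sqrt (2 / Real.pi) * Real.sqrt (2 * Real.pi) = 2 := by
      rw [← Real.sqrt_mul (by positivity)]
      rw [show 2 / Real.pi * (2 * Real.pi) = 2 ^ 2 by field_simp]
      exact Real.sqrt_sq (by norm_num)
    have harg : -(|l| / (t * σ)) ^ 2 / 2 = -l ^ 2 / (2 * t ^ 2 * σ ^ 2) := by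
      rw [div_pow, sq_abs, mul_pow]
      field_simp
    have hterm : 2 * (t * σ) * psi (|l| / (t * σ)) =
        Real.sqrt (2 / Real.pi) * t * σ * Real.exp (-l ^ 2 / (2 * t ^ 2 * σ ^ 2)) := by
      rw [psi, harg]
      have h2 : 2 * (Real.sqrt (2 * Real.pi))⁻¹ = Real.sqrt (2 / Real.pi) := by
        have h22 : Real.sqrt 2 * Real.sqrt 2 = 2 := Real.mul_self_sqrt (by norm_num)
        have hπ : 0 < Real.sqrt Real.pi := Real.sqrt_pos.mpr Real.pi_pos
        rw [Real.sqrt_mul (by norm_num), Real.sqrt_div (by norm_num)]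
        field_simp
        nlinarith [h22, hπ]
      calc 2 * (t * σ) * ((Real.sqrt (2 * Real.pi))⁻¹ *
              Real.exp (-l ^ 2 / (2 * t ^ 2 * σ ^ 2)))
          = (2 * (Real.sqrt (2 * Real.pi))⁻¹) * t * σ *
              Real.exp (-l ^ 2 / (2 * t ^ 2 * σ ^ 2)) := by ring
        _ = _ := by rw [h2]
    linarith [hterm]
  · intro l
    rw [hred l]
    exact integral_nonneg fun u => mul_nonneg (le_max_right _ _) (psi_nonneg u)
  · intro l₁ l₂ hl
    rw [hred l₁, hred l₂]
    apply integral_mono (hintmax _ (abs_nonneg l₂)) (hintmax _ (abs_nonneg l₁))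
    intro u
    exact mul_le_mul_of_nonneg_right (max_le_max (by linarith) le_rfl) (psi_nonneg u)
end
end

section
/- Let X ~ N(0,1) be a standard Gaussian random variable, let t > 0, and let l ∈ ℝ with |l| ≤ t. Then E[|l + tX| − |l|] ≥ 0.1666·t. (Indeed E[|l + tX| − |l|] ≥ √(2/π) t e^{−1/2} − 2t(1 − Φ(1)), and √(2/π) e^{−1/2} − 2(1 − Φ(1)) ≥ 0.1666.) -/
open MeasureTheory ProbabilityTheory Finset Filter

noncomputable section

section Aux

open Real


lemma myexp_integrable : Integrable (fun x : ℝ => rexp (-x^2/2)) := by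
  have h : (fun x : ℝ => rexp (-x^2/2)) = fun x => rexp (-(2⁻¹ : ℝ) * x^2) := by
    funext x; congr 1; ring
  rw [h]; exact integrable_exp_neg_mul_sq (by norm_num)

lemma myxexp_integrable : Integrable (fun x : ℝ => x * rexp (-x^2/2)) := by
  have h : (fun x : ℝ => x * rexp (-x^2/2)) = fun x => x * rexp (-(2⁻¹ : ℝ) * x^2) := by
    funext x; congr 2; ring
  rw [h]; exact integrable_mul_exp_neg_mul_sq (by norm_num)

lemma pdf_eq (x : ℝ) : gaussianPDFReal 0 1 x = (Real.sqrt (2*π))⁻¹ * rexp (-x^2/2) := by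
  simp [gaussianPDFReal]

lemma pdf_symm (x : ℝ) : gaussianPDFReal 0 1 (-x) = gaussianPDFReal 0 1 x := by
  simp [gaussianPDFReal, neg_sq]

lemma gauss_int (f : ℝ → ℝ) :
    ∫ x, f x ∂ gaussianReal 0 1 = ∫ x, gaussianPDFReal 0 1 x * f x := by
  rw [gaussianReal_of_var_ne_zero 0 one_ne_zero]
  have h : gaussianPDF 0 1 = fun x => ((gaussianPDFReal 0 1 x).toNNReal : ENNReal) := rfl
  rw [h, integral_withDensity_eq_integral_smul (measurable_gaussianPDFReal 0 1).real_toNNReal f]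
  congr 1; funext x
  rw [NNReal.smul_def, smul_eq_mul, Real.coe_toNNReal _ (gaussianPDFReal_nonneg 0 1 x)]

lemma integral_comp_neg_real (f : ℝ → ℝ) : ∫ x : ℝ, f (-x) = ∫ x, f x := by
  have A : MeasurableEmbedding fun x : ℝ => -x :=
    (Homeomorph.neg ℝ).isClosedEmbedding.measurableEmbedding
  have h := A.integral_map (μ := (volume : Measure ℝ)) f
  rw [Measure.map_neg_eq_self (volume : Measure ℝ)] at h
  exact h.symm


lemma poly_int :
    ∫ x in (0:ℝ)..1, (1 - x^2/2 + x^4/8 - x^6/48 + x^8/384 - x^10/3840 + x^12/46080 - x^14/564480) =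
      1 - 1/6 + 1/40 - 1/336 + 1/3456 - 1/42240 + 1/599040 - 1/8467200 := by
  have key : ∀ x : ℝ, HasDerivAt (fun y : ℝ => y - y^3/6 + y^5/40 - y^7/336 + y^9/3456
      - y^11/42240 + y^13/599040 - y^15/8467200)
      (1 - x^2/2 + x^4/8 - x^6/48 + x^8/384 - x^10/3840 + x^12/46080 - x^14/564480) x := by
    intro x
    have h := (((((((hasDerivAt_id x).sub ((hasDerivAt_pow 3 x).div_const 6)).add
      ((hasDerivAt_pow 5 x).div_const 40)).sub ((hasDerivAt_pow 7 x).div_const 336)).add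
      ((hasDerivAt_pow 9 x).div_const 3456)).sub ((hasDerivAt_pow 11 x).div_const 42240)).add
      ((hasDerivAt_pow 13 x).div_const 599040)).sub ((hasDerivAt_pow 15 x).div_const 8467200)
    convert h using 1
    · rfl
    · rfl
    · rfl
    norm_num
    ring
  rw [intervalIntegral.integral_eq_sub_of_hasDerivAt (fun x _ => key x)
    (by apply Continuous.intervalIntegrable; fun_prop)]
  norm_num

lemma exp_lb {x : ℝ} (hx : x ∈ Set.Icc (0:ℝ) 1) :
    1 - x^2/2 + x^4/8 - x^6/48 + x^8/384 - x^10/3840 + x^12/46080 - x^14/564480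
      ≤ rexp (-x^2/2) := by
  obtain ⟨h0, h1⟩ := hx
  have hx2 : x^2 ≤ 1 := by nlinarith
  have habs : |(-x^2/2 : ℝ)| ≤ 1 := by
    rw [abs_of_nonpos (by nlinarith [sq_nonneg x])]; nlinarith
  have hb := Real.exp_bound habs (n := 7) (by norm_num)
  have h2 := (abs_le.1 hb).1
  have hsum : ∑ m ∈ Finset.range 7, (-x^2/2)^m / m.factorial
      = 1 - x^2/2 + x^4/8 - x^6/48 + x^8/384 - x^10/3840 + x^12/46080 := by
    simp [Finset.sum_range_succ, Nat.factorial]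
    ring
  rw [hsum] at h2
  have habs7 : |(-x^2/2 : ℝ)|^7 = (x^2/2)^7 := by
    rw [abs_of_nonpos (by nlinarith [sq_nonneg x])]; ring
  rw [habs7] at h2
  norm_num [Nat.factorial] at h2 ⊢
  nlinarith [h2]


lemma I_lb : (0.8556243 : ℝ) ≤ ∫ x in (0:ℝ)..1, rexp (-x^2/2) := by
  have h := intervalIntegral.integral_mono_on (f := fun x : ℝ =>
      1 - x^2/2 + x^4/8 - x^6/48 + x^8/384 - x^10/3840 + x^12/46080 - x^14/564480)
      (g := fun x : ℝ => rexp (-x^2/2)) (μ := volume) zero_le_one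
      (by apply Continuous.intervalIntegrable; fun_prop)
      (by apply Continuous.intervalIntegrable; fun_prop)
      (fun x hx => exp_lb hx)
  rw [poly_int] at h
  norm_num at h ⊢
  linarith

lemma exp_half_lb : (0.60653 : ℝ) ≤ rexp (-(1/2)) := by
  have habs : |(-(1/2 : ℝ))| = 1/2 := by
    rw [abs_neg]; exact abs_of_nonneg (by norm_num)
  have hb := Real.exp_bound (x := -(1/2 : ℝ)) (by rw [habs]; norm_num) (n := 7) (by norm_num)
  rw [habs] at hb
  have h2 := (abs_le.1 hb).1
  norm_num [Finset.sum_range_succ, Nat.factorial] at h2 ⊢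
  nlinarith [h2]

lemma hE_val : ∫ x in Set.Ioi (1:ℝ), x * rexp (-x^2/2) = rexp (-(1/2)) := by
  have hderiv : ∀ x ∈ Set.Ioi (1:ℝ), HasDerivAt (fun y : ℝ => -rexp (-y^2/2))
      (x * rexp (-x^2/2)) x := by
    intro x _
    have h1 : HasDerivAt (fun y : ℝ => -y^2/2) (-x) x := by
      have := (hasDerivAt_pow 2 x).neg.div_const 2
      convert this using 1
      · rfl
      · rfl
      norm_num; ring
    have := (h1.exp).neg
    convert this using 1
    · rfl
    · rfl
    · rfl
    ring
  have htend : Tendsto (fun y : ℝ => -rexp (-y^2/2)) atTop (nhds 0) := by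
    rw [show (0:ℝ) = -0 by norm_num]
    apply Tendsto.neg
    have h1 : Tendsto (fun y : ℝ => y^2/2) atTop atTop :=
      (tendsto_pow_atTop two_ne_zero).atTop_div_const two_pos
    have := Real.tendsto_exp_neg_atTop_nhds_zero.comp h1
    convert this using 2 with y
    simp [Function.comp]; ring_nf
  have h := integral_Ioi_of_hasDerivAt_of_nonneg (g := fun y : ℝ => -rexp (-y^2/2))
    (g' := fun x : ℝ => x * rexp (-x^2/2)) (a := 1)
    ((Continuous.continuousWithinAt (by fun_prop : Continuous (fun y : ℝ => -rexp (-y^2/2))))) hderiv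
    (fun x hx => by have : (1:ℝ) < x := hx; positivity) htend
  rw [h]; norm_num

lemma hT_val : ∫ x in Set.Ioi (1:ℝ), rexp (-x^2/2)
    = Real.sqrt (2*π)/2 - ∫ x in (0:ℝ)..1, rexp (-x^2/2) := by
  have hIoi0 : ∫ x in Set.Ioi (0:ℝ), rexp (-x^2/2) = Real.sqrt (2*π)/2 := by
    have h := integral_gaussian_Ioi (1/2 : ℝ)
    rw [show π / (1/2:ℝ) = 2*π by ring] at h
    simp only [show ∀ x : ℝ, -x^2/2 = -(1/2 : ℝ)*x^2 from fun x => by ring]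
    exact h
  have hsplit : (∫ x in Set.Ioc (0:ℝ) 1, rexp (-x^2/2)) + (∫ x in Set.Ioi (1:ℝ), rexp (-x^2/2))
      = ∫ x in Set.Ioi (0:ℝ), rexp (-x^2/2) := by
    rw [← MeasureTheory.setIntegral_union (Set.Ioc_disjoint_Ioi le_rfl) measurableSet_Ioi
      myexp_integrable.integrableOn myexp_integrable.integrableOn,
      Set.Ioc_union_Ioi_eq_Ioi zero_le_one]
  have hIoc : ∫ x in Set.Ioc (0:ℝ) 1, rexp (-x^2/2) = ∫ x in (0:ℝ)..1, rexp (-x^2/2) := by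
    rw [intervalIntegral.integral_of_le zero_le_one]
  rw [hIoc] at hsplit
  linarith [hsplit, hIoi0]


lemma pdf_cont : Continuous (gaussianPDFReal 0 1) := by
  rw [gaussianPDFReal_def]; fun_prop

lemma key (t l : ℝ) (ht : 0 < t) (hl0 : 0 ≤ l) (hlt : l ≤ t) :
    0.1666 * t ≤ ∫ x, gaussianPDFReal 0 1 x * (|l + t * x| - |l|) := by
  set s := Real.sqrt (2*π) with hs_def
  have hπ : 0 < π := Real.pi_pos
  have hs : 0 < s := Real.sqrt_pos.2 (by positivity)
  have hφnn : ∀ x, 0 ≤ gaussianPDFReal 0 1 x := gaussianPDFReal_nonneg 0 1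
  have hIφ : Integrable (gaussianPDFReal 0 1) := integrable_gaussianPDFReal 0 1
  have hIφx : Integrable (fun x => gaussianPDFReal 0 1 x * x) :=
    (myxexp_integrable.const_mul s⁻¹).congr
      (Filter.Eventually.of_forall fun x => by simp only [pdf_eq]; ring)
  have hIφabs : Integrable (fun x => gaussianPDFReal 0 1 x * |x|) :=
    hIφx.abs.congr (Filter.Eventually.of_forall fun x => by
      simp only [abs_mul]; rw [abs_of_nonneg (hφnn x)])
  -- pointwise identity
  have habs : ∀ x : ℝ, |l + t*x| - |l| = t*x + 2 * max (-(l+t*x)) 0 := by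
    intro x
    rw [abs_of_nonneg hl0]
    rcases le_total 0 (l + t*x) with h | h
    · rw [max_eq_right (by linarith), abs_of_nonneg h]; ring
    · rw [max_eq_left (by linarith), abs_of_nonpos h]; ring
  -- the two pieces
  have hIF₁ : Integrable (fun x => gaussianPDFReal 0 1 x * (t*x)) :=
    (hIφx.const_mul t).congr (Filter.Eventually.of_forall fun x => by ring)
  have hmaxle : ∀ x : ℝ, max (-(l+t*x)) 0 ≤ l + t*|x| := by
    intro x
    have h1 : -(t*|x|) ≤ t*x := by
      have := neg_abs_le (t*x)
      rwa [abs_mul, abs_of_pos ht] at this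
    exact max_le (by linarith) (by positivity)
  have hIF₂ : Integrable (fun x => gaussianPDFReal 0 1 x * (2 * max (-(l+t*x)) 0)) := by
    apply Integrable.mono' ((hIφ.const_mul (2*l)).add ((hIφabs.const_mul (2*t))))
    · exact Continuous.aestronglyMeasurable (by
        exact pdf_cont.mul (continuous_const.mul ((continuous_const.add
          (continuous_const.mul continuous_id)).neg.max continuous_const)))
    · refine Filter.Eventually.of_forall fun x => ?_
      have hmn : (0:ℝ) ≤ max (-(l+t*x)) 0 := le_max_right _ _
      rw [Real.norm_eq_abs, abs_of_nonneg (mul_nonneg (hφnn x)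
        (mul_nonneg two_pos.le (le_max_right _ _)))]
      have := mul_le_mul_of_nonneg_left (hmaxle x) (hφnn x)
      simp only [Pi.add_apply]
      nlinarith [hφnn x]
  have heq : ∫ x, gaussianPDFReal 0 1 x * (|l + t * x| - |l|)
      = (∫ x, gaussianPDFReal 0 1 x * (t*x))
        + ∫ x, gaussianPDFReal 0 1 x * (2 * max (-(l+t*x)) 0) := by
    rw [← integral_add hIF₁ hIF₂]
    congr 1; funext x; rw [habs x]; ring
  have hF₁0 : ∫ x, gaussianPDFReal 0 1 x * (t*x) = 0 := by
    have h := integral_comp_neg_real (fun x => gaussianPDFReal 0 1 x * (t*x))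
    have h2 : (fun x => gaussianPDFReal 0 1 (-x) * (t * -x))
        = fun x => -(gaussianPDFReal 0 1 x * (t*x)) := by
      funext x; rw [pdf_symm x]; ring
    rw [h2, integral_neg] at h
    linarith
  -- the comparison function M
  set M : ℝ → ℝ := fun x => gaussianPDFReal 0 1 x * max (-(1+x)) 0 with hM_def
  have hM_ind : M = Set.indicator (Set.Iic (-1:ℝ))
      (fun x => gaussianPDFReal 0 1 x * (-(1+x))) := by
    funext x
    by_cases hx : x ≤ -1
    · rw [Set.indicator_of_mem (Set.mem_Iic.mpr hx), hM_def]
      simp only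
      rw [max_eq_left (by linarith)]
    · rw [Set.indicator_of_notMem (by simpa using hx), hM_def]
      simp only
      rw [max_eq_right (by push_neg at hx; linarith), mul_zero]
  have hInt1x : Integrable (fun x => gaussianPDFReal 0 1 x * (-(1+x))) :=
    ((hIφ.add hIφx).neg).congr (Filter.Eventually.of_forall fun x => by simp; ring)
  have hMint : Integrable M := by
    rw [hM_ind, MeasureTheory.integrable_indicator_iff measurableSet_Iic]
    exact hInt1x.integrableOn
  -- J = ∫ M
  have hJ : ∫ x, M x = s⁻¹ * (rexp (-(1/2)) - (s/2 - ∫ x in (0:ℝ)..1, rexp (-x^2/2))) := by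
    rw [hM_ind, MeasureTheory.integral_indicator measurableSet_Iic]
    have step1 : ∫ x in Set.Iic (-1:ℝ), gaussianPDFReal 0 1 x * (-(1+x))
        = ∫ x in Set.Ioi (1:ℝ), gaussianPDFReal 0 1 x * (x - 1) := by
      have h := integral_comp_neg_Iic (-1 : ℝ)
        (fun y => gaussianPDFReal 0 1 (-y) * (-(1 + -y)))
      simp only [neg_neg] at h
      rw [h]
      apply MeasureTheory.setIntegral_congr_fun measurableSet_Ioi
      intro x _
      simp only [pdf_symm]; ring
    rw [step1]
    have step2 : ∀ x : ℝ, gaussianPDFReal 0 1 x * (x - 1)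
        = s⁻¹ * (x * rexp (-x^2/2)) - s⁻¹ * rexp (-x^2/2) := by
      intro x; rw [pdf_eq x]; ring
    simp only [step2]
    rw [MeasureTheory.integral_sub ((myxexp_integrable.const_mul s⁻¹).integrableOn)
      ((myexp_integrable.const_mul s⁻¹).integrableOn),
      MeasureTheory.integral_const_mul, MeasureTheory.integral_const_mul, hE_val, hT_val]
    ring
  -- monotone comparison
  have hmono : (2*t) * ∫ x, M x ≤ ∫ x, gaussianPDFReal 0 1 x * (2 * max (-(l+t*x)) 0) := by
    rw [← MeasureTheory.integral_const_mul]
    apply MeasureTheory.integral_mono (hMint.const_mul (2*t)) hIF₂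
    intro x
    simp only [hM_def]
    have hmax : t * max (-(1+x)) 0 ≤ max (-(l+t*x)) 0 := by
      rcases le_total (-(1+x)) 0 with h | h
      · rw [max_eq_right h, mul_zero]; exact le_max_right _ _
      · rw [max_eq_left h]
        calc t * -(1+x) = -(t + t*x) := by ring
          _ ≤ -(l + t*x) := by nlinarith
          _ ≤ max (-(l+t*x)) 0 := le_max_left _ _
    nlinarith [mul_le_mul_of_nonneg_left hmax (hφnn x), hφnn x]
  -- numerics
  have hs2 : s^2 = 2*π := Real.sq_sqrt (by positivity)
  have hs_ub : s ≤ 2.506629 := by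
    nlinarith [Real.pi_lt_d6, Real.sqrt_nonneg (2*π)]
  set I : ℝ := ∫ x in (0:ℝ)..1, rexp (-x^2/2) with hI_def
  have h1 : (0.1666:ℝ) * s ≤ 2 * (rexp (-(1/2)) - (s/2 - I)) := by
    nlinarith [exp_half_lb, I_lb, hs_ub]
  have hfinal : 0.1666 * t ≤ (2*t) * ∫ x, M x := by
    rw [hJ]
    have h3 : (0.1666:ℝ) ≤ 2 * (rexp (-(1/2)) - (s/2 - I)) / s := by
      rw [le_div_iff₀ hs]; linarith
    calc (0.1666:ℝ) * t = t * 0.1666 := by ring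
      _ ≤ t * (2 * (rexp (-(1/2)) - (s/2 - I)) / s) :=
          mul_le_mul_of_nonneg_left h3 ht.le
      _ = 2*t*(s⁻¹ * (rexp (-(1/2)) - (s/2 - I))) := by ring
  calc (0.1666:ℝ) * t ≤ (2*t) * ∫ x, M x := hfinal
    _ ≤ ∫ x, gaussianPDFReal 0 1 x * (2 * max (-(l+t*x)) 0) := hmono
    _ = ∫ x, gaussianPDFReal 0 1 x * (|l + t * x| - |l|) := by rw [heq, hF₁0, zero_add]


end Aux

/-- For `X ~ N(0,1)`, `t > 0` and `|l| ≤ t`,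
`E[|l + tX| - |l|] ≥ 0.1666·t`. -/
theorem stmt17 (t l : ℝ) (ht : 0 < t) (hl : |l| ≤ t) :
    0.1666 * t ≤ ∫ x, (|l + t * x| - |l|) ∂ gaussianReal 0 1 := by
  rw [gauss_int (fun x => |l + t * x| - |l|)]
  rcases le_or_gt 0 l with h | h
  · exact key t l ht h (by rwa [abs_of_nonneg h] at hl)
  · have h2 := key t (-l) ht (by linarith) (by rwa [abs_of_neg h] at hl)
    have h3 := integral_comp_neg_real (fun x => gaussianPDFReal 0 1 x * (|l + t * x| - |l|))
    have h4 : (fun x => gaussianPDFReal 0 1 (-x) * (|l + t * (-x)| - |l|))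
        = fun x => gaussianPDFReal 0 1 x * (|(-l) + t * x| - |(-l)|) := by
      funext x
      rw [pdf_symm x]
      congr 1
      rw [abs_neg l]
      congr 1
      rw [← abs_neg (l + t * (-x))]
      congr 1
      ring
    rw [h4] at h3
    rw [← h3]
    exact h2
end
end
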